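/- Let K_{m₁,m₂} have bipartition X = {x₁,…,x_{m₁}}, Y = {y₁,…,y_{m₂}} and let S_i = {x₁,…,x_i, y₁,…,y_{s−i}} with 1 ≤ i ≤ s−1 and min{m₁−i, m₂−(s−i)} ≥ 1. For 1 ≤ j ≤ min{m₁−i, m₂−(s−i)}, define the tree T_j with vertex set S_i ∪ {x_{i+j}, y_{s−i+j}} and edge set {y_{s−i+j}x_t : 1 ≤ t ≤ i} ∪ {x_{i+j}y_t : 1 ≤ t ≤ s−i} ∪ {x_{i+j}y_{s−i+j}}. Then the trees T_j are pairwise completely independent S_i-Steiner trees in K_{m₁,m₂}. -/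
import Mathlib


open SimpleGraph

/-- A walk of `G` lies inside the subgraph `T` if all of its edges are edges of `T`. -/
def SimpleGraph.Subgraph.walkIn {V : Type*} {G : SimpleGraph V} (T : G.Subgraph)
    {u v : V} (P : G.Walk u v) : Prop :=
  ∀ e ∈ P.edges, e ∈ T.edgeSet

/-- `T` is an `S`-Steiner tree of `G`: a subtree of `G` containing all of `S`
all of whose leaves (vertices without two distinct neighbours) lie in `S`. -/
def SimpleGraph.IsSteinerTree {V : Type*} (G : SimpleGraph V) (S : Set V)
    (T : G.Subgraph) : Prop :=
  T.coe.IsTree ∧ S ⊆ T.verts ∧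
    ∀ v ∈ T.verts, ¬ (∃ a b, a ≠ b ∧ T.Adj v a ∧ T.Adj v b) → v ∈ S

/-- A family of subgraphs of `G` is completely independent (w.r.t. the terminal set `S`)
if the members are pairwise edge-disjoint, their vertex sets pairwise intersect exactly
in `S`, and for any two vertices of `S`, paths connecting them inside two distinct members
are internally disjoint. -/
def SimpleGraph.CompletelyIndependent {V : Type*} (G : SimpleGraph V) (S : Set V)
    {ι : Type*} (Ts : ι → G.Subgraph) : Prop :=
  ∀ p q, p ≠ q →
    (Ts p).edgeSet ∩ (Ts q).edgeSet = ∅ ∧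
    (Ts p).verts ∩ (Ts q).verts = S ∧
    ∀ x₁ ∈ S, ∀ x₂ ∈ S, x₁ ≠ x₂ →
      ∀ P Q : G.Walk x₁ x₂, P.IsPath → Q.IsPath →
        (Ts p).walkIn P → (Ts q).walkIn Q →
        ∀ v ∈ P.support, v ∈ Q.support → v = x₁ ∨ v = x₂

/-- A family of subgraphs of `G` is internally disjoint (w.r.t. the terminal set `S`)
if the members are pairwise edge-disjoint and their vertex sets pairwise intersect
exactly in `S`. -/
def SimpleGraph.InternallyDisjoint {V : Type*} (G : SimpleGraph V) (S : Set V)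
    {ι : Type*} (Ts : ι → G.Subgraph) : Prop :=
  ∀ p q, p ≠ q →
    (Ts p).edgeSet ∩ (Ts q).edgeSet = ∅ ∧ (Ts p).verts ∩ (Ts q).verts = S

/-- `κ*_G(S)`: the maximum number of pairwise completely independent `S`-Steiner trees. -/
noncomputable def SimpleGraph.cisstPacking {V : Type*} (G : SimpleGraph V) (S : Set V) : ℕ :=
  sSup {k | ∃ Ts : Fin k → G.Subgraph,
    (∀ i, G.IsSteinerTree S (Ts i)) ∧ G.CompletelyIndependent S Ts}

/-- `κ_G(S)`: the maximum number of pairwise internally disjoint `S`-Steiner trees. -/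
noncomputable def SimpleGraph.idstPacking {V : Type*} (G : SimpleGraph V) (S : Set V) : ℕ :=
  sSup {k | ∃ Ts : Fin k → G.Subgraph,
    (∀ i, G.IsSteinerTree S (Ts i)) ∧ G.InternallyDisjoint S Ts}

/-- The generalized `k*`-connectivity `κ*_k(G)`. -/
noncomputable def SimpleGraph.genConnStar {V : Type*} (G : SimpleGraph V) (k : ℕ) : ℕ :=
  sInf (G.cisstPacking '' {S : Set V | S.ncard = k})

/-- The generalized `k`-connectivity `κ_k(G)`. -/
noncomputable def SimpleGraph.genConnK {V : Type*} (G : SimpleGraph V) (k : ℕ) : ℕ :=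
  sInf (G.idstPacking '' {S : Set V | S.ncard = k})

lemma aux_cycle_start_two_nbrs {V : Type*} {G : SimpleGraph V} {v : V} {c : G.Walk v v}
    (hc : c.IsCycle) : ∃ a b, a ≠ b ∧ G.Adj v a ∧ G.Adj v b := by
  cases c with
  | nil => exact absurd rfl hc.ne_nil
  | @cons _ w _ h q =>
    rw [Walk.cons_isCycle_iff] at hc
    obtain ⟨hq, he⟩ := hc
    cases hrev : q.reverse with
    | nil =>
      exfalso
      have : q.length = 0 := by
        have := congrArg Walk.length hrev
        simpa using this
      cases q with
      | nil => exact G.irrefl h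
      | cons _ _ => simp [Walk.length_cons] at this
    | @cons _ u _ h2 r =>
      refine ⟨w, u, ?_, h, h2⟩
      intro huw
      subst huw
      apply he
      have : s(v, w) ∈ q.reverse.edges := by rw [hrev]; simp
      rwa [Walk.edges_reverse, List.mem_reverse] at this

lemma aux_cycle_two_nbrs {V : Type*} [DecidableEq V] {G : SimpleGraph V} {v : V} {c : G.Walk v v}
    (hc : c.IsCycle) {u : V} (hu : u ∈ c.support) :
    ∃ a b, a ≠ b ∧ G.Adj u a ∧ G.Adj u b :=
  aux_cycle_start_two_nbrs (hc.rotate hu)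

lemma aux_internal_two_edges {V : Type*} {G : SimpleGraph V} :
    ∀ {x y : V} (P : G.Walk x y), P.IsPath → ∀ {v}, v ∈ P.support → v ≠ x → v ≠ y →
      ∃ a b, a ≠ b ∧ s(v, a) ∈ P.edges ∧ s(v, b) ∈ P.edges := by
  intro x y P
  induction P with
  | nil => intro _ v hv hvx _; simp at hv; exact absurd hv hvx
  | @cons x w y h q ih =>
    intro hP v hv hvx hvy
    rw [Walk.support_cons, List.mem_cons] at hv
    rcases hv with rfl | hv
    · exact absurd rfl hvx
    rw [Walk.cons_isPath_iff] at hP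
    obtain ⟨hq, hx⟩ := hP
    by_cases hvw : v = w
    · subst hvw
      cases q with
      | nil => exact absurd rfl hvy
      | @cons _ u _ h2 r =>
        refine ⟨x, u, ?_, ?_, ?_⟩
        · intro hxu
          exact hx (by rw [hxu, Walk.support_cons]; simp [Walk.start_mem_support])
        · simp [Sym2.eq_swap]
        · simp
    · obtain ⟨a, b, hab, ha, hb⟩ := ih hq hv hvw hvy
      exact ⟨a, b, hab, by simp [ha], by simp [hb]⟩

lemma aux_walkIn_support {V : Type*} {G : SimpleGraph V} {T : G.Subgraph} :
    ∀ {x y : V} (P : G.Walk x y), (∀ e ∈ P.edges, e ∈ T.edgeSet) →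
      ∀ v ∈ P.support, v = x ∨ v ∈ T.verts := by
  intro x y P
  induction P with
  | nil => intro _ v hv; simp at hv; exact Or.inl hv
  | @cons x w y h q ih =>
    intro hW v hv
    rw [Walk.support_cons, List.mem_cons] at hv
    rcases hv with rfl | hv
    · exact Or.inl rfl
    · have hadj : T.Adj x w := by
        rw [← SimpleGraph.Subgraph.mem_edgeSet]
        exact hW _ (by simp)
      rcases ih (fun e he => hW e (by simp [he])) v hv with rfl | hmem
      · exact Or.inr hadj.snd_mem
      · exact Or.inr hmem

theorem stmt_18 (m₁ m₂ s i : ℕ) (hi1 : 1 ≤ i) (hi2 : i ≤ s - 1)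
    (hmin : 1 ≤ min (m₁ - i) (m₂ - (s - i)))
    (him : i ≤ m₁) (hsim : s - i ≤ m₂)
    (Si : Set (Fin m₁ ⊕ Fin m₂))
    (hSi : Si = {v | (∃ t : Fin m₁, v = Sum.inl t ∧ (t : ℕ) < i) ∨
                     (∃ t : Fin m₂, v = Sum.inr t ∧ (t : ℕ) < s - i)})
    (Ts : Fin (min (m₁ - i) (m₂ - (s - i))) →
      (completeBipartiteGraph (Fin m₁) (Fin m₂)).Subgraph)
    (hverts : ∀ j, (Ts j).verts =
      Si ∪ {Sum.inl (⟨i + j, by have := j.isLt; omega⟩ : Fin m₁),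
            Sum.inr (⟨s - i + j, by have := j.isLt; omega⟩ : Fin m₂)})
    (hedges : ∀ j, (Ts j).edgeSet =
      {e | ∃ t : Fin m₁, (t : ℕ) < i ∧
        e = s(Sum.inr (⟨s - i + j, by have := j.isLt; omega⟩ : Fin m₂), Sum.inl t)} ∪
      {e | ∃ t : Fin m₂, (t : ℕ) < s - i ∧
        e = s(Sum.inl (⟨i + j, by have := j.isLt; omega⟩ : Fin m₁), Sum.inr t)} ∪
      {s(Sum.inl (⟨i + j, by have := j.isLt; omega⟩ : Fin m₁),
         Sum.inr (⟨s - i + j, by have := j.isLt; omega⟩ : Fin m₂))}) :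
    (∀ j, (completeBipartiteGraph (Fin m₁) (Fin m₂)).IsSteinerTree Si (Ts j)) ∧
    (completeBipartiteGraph (Fin m₁) (Fin m₂)).CompletelyIndependent Si Ts := by
  have hs1 : 1 ≤ s - i := by omega
  have hm2 : 1 ≤ m₂ := by omega
  have hjA : ∀ j : Fin (min (m₁ - i) (m₂ - (s - i))), i + (j : ℕ) < m₁ :=
    fun j => by have := j.isLt; omega
  have hjB : ∀ j : Fin (min (m₁ - i) (m₂ - (s - i))), s - i + (j : ℕ) < m₂ :=
    fun j => by have := j.isLt; omega
  let A : Fin (min (m₁ - i) (m₂ - (s - i))) → Fin m₁ ⊕ Fin m₂ :=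
    fun j => Sum.inl ⟨i + j, hjA j⟩
  let B : Fin (min (m₁ - i) (m₂ - (s - i))) → Fin m₁ ⊕ Fin m₂ :=
    fun j => Sum.inr ⟨s - i + j, hjB j⟩
  have hA : ∀ j, A j = Sum.inl ⟨i + j, hjA j⟩ := fun j => rfl
  have hB : ∀ j, B j = Sum.inr ⟨s - i + j, hjB j⟩ := fun j => rfl
  -- rewrite hverts and hedges in terms of A and B
  have hverts' : ∀ j, (Ts j).verts = Si ∪ {A j, B j} := fun j => hverts j
  have hedges' : ∀ j, (Ts j).edgeSet =
      {e | ∃ t : Fin m₁, (t : ℕ) < i ∧ e = s(B j, Sum.inl t)} ∪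
      {e | ∃ t : Fin m₂, (t : ℕ) < s - i ∧ e = s(A j, Sum.inr t)} ∪
      {s(A j, B j)} := fun j => hedges j
  have hadj : ∀ (j) (u v : Fin m₁ ⊕ Fin m₂), (Ts j).Adj u v ↔
      (((∃ t : Fin m₁, (t : ℕ) < i ∧ (u = B j ∧ v = Sum.inl t ∨ u = Sum.inl t ∧ v = B j)) ∨
       (∃ t : Fin m₂, (t : ℕ) < s - i ∧ (u = A j ∧ v = Sum.inr t ∨ u = Sum.inr t ∧ v = A j))) ∨
       (u = A j ∧ v = B j ∨ u = B j ∧ v = A j)) := by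
    intro j u v
    rw [← Subgraph.mem_edgeSet, hedges' j]
    simp only [Set.mem_union, Set.mem_setOf_eq, Set.mem_singleton_iff, Sym2.eq_iff]
  have hA_not_Si : ∀ j, A j ∉ Si := by
    intro j hj
    rw [hSi] at hj
    rcases hj with ⟨t, ht, ht2⟩ | ⟨t, ht, _⟩
    · rw [hA j] at ht; simp only [Sum.inl.injEq] at ht
      have := congrArg Fin.val ht; simp at this; omega
    · rw [hA j] at ht; simp at ht
  have hB_not_Si : ∀ j, B j ∉ Si := by
    intro j hj
    rw [hSi] at hj
    rcases hj with ⟨t, ht, _⟩ | ⟨t, ht, ht2⟩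
    · rw [hB j] at ht; simp at ht
    · rw [hB j] at ht; simp only [Sum.inr.injEq] at ht
      have := congrArg Fin.val ht; simp at this; omega
  have hA_mem : ∀ j, A j ∈ (Ts j).verts := by
    intro j; rw [hverts' j]; exact Or.inr (Or.inl rfl)
  have hB_mem : ∀ j, B j ∈ (Ts j).verts := by
    intro j; rw [hverts' j]; exact Or.inr (Or.inr rfl)
  -- a vertex of Si has a unique neighbour in each tree
  have huniq : ∀ (j) (v w w' : Fin m₁ ⊕ Fin m₂), v ∈ Si →
      (Ts j).Adj v w → (Ts j).Adj v w' → w = w' := by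
    intro j v w w' hv h1 h2
    rw [hSi] at hv
    rw [hadj] at h1 h2
    rcases hv with ⟨t, rfl, ht⟩ | ⟨t, rfl, ht⟩
    · have e1 : w = B j := by
        rcases h1 with (⟨t', ht', ⟨hc1, _⟩ | ⟨hc1, hc2⟩⟩ | ⟨t', ht', ⟨hc1, _⟩ | ⟨hc1, _⟩⟩) |
          (⟨hc1, _⟩ | ⟨hc1, hc2⟩)
        · rw [hB j] at hc1; simp at hc1
        · exact hc2
        · rw [hA j] at hc1; simp only [Sum.inl.injEq] at hc1
          have := congrArg Fin.val hc1; simp at this; omega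
        · simp at hc1
        · rw [hA j] at hc1; simp only [Sum.inl.injEq] at hc1
          have := congrArg Fin.val hc1; simp at this; omega
        · rw [hB j] at hc1; simp at hc1
      have e2 : w' = B j := by
        rcases h2 with (⟨t', ht', ⟨hc1, _⟩ | ⟨hc1, hc2⟩⟩ | ⟨t', ht', ⟨hc1, _⟩ | ⟨hc1, _⟩⟩) |
          (⟨hc1, _⟩ | ⟨hc1, hc2⟩)
        · rw [hB j] at hc1; simp at hc1
        · exact hc2
        · rw [hA j] at hc1; simp only [Sum.inl.injEq] at hc1
          have := congrArg Fin.val hc1; simp at this; omega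
        · simp at hc1
        · rw [hA j] at hc1; simp only [Sum.inl.injEq] at hc1
          have := congrArg Fin.val hc1; simp at this; omega
        · rw [hB j] at hc1; simp at hc1
      rw [e1, e2]
    · have e1 : w = A j := by
        rcases h1 with (⟨t', ht', ⟨hc1, _⟩ | ⟨hc1, _⟩⟩ | ⟨t', ht', ⟨hc1, _⟩ | ⟨hc1, hc2⟩⟩) |
          (⟨hc1, _⟩ | ⟨hc1, _⟩)
        · rw [hB j] at hc1; simp only [Sum.inr.injEq] at hc1
          have := congrArg Fin.val hc1; simp at this; omega
        · simp at hc1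
        · rw [hA j] at hc1; simp at hc1
        · exact hc2
        · rw [hA j] at hc1; simp at hc1
        · rw [hB j] at hc1; simp only [Sum.inr.injEq] at hc1
          have := congrArg Fin.val hc1; simp at this; omega
      have e2 : w' = A j := by
        rcases h2 with (⟨t', ht', ⟨hc1, _⟩ | ⟨hc1, _⟩⟩ | ⟨t', ht', ⟨hc1, _⟩ | ⟨hc1, hc2⟩⟩) |
          (⟨hc1, _⟩ | ⟨hc1, _⟩)
        · rw [hB j] at hc1; simp only [Sum.inr.injEq] at hc1
          have := congrArg Fin.val hc1; simp at this; omega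
        · simp at hc1
        · rw [hA j] at hc1; simp at hc1
        · exact hc2
        · rw [hA j] at hc1; simp at hc1
        · rw [hB j] at hc1; simp only [Sum.inr.injEq] at hc1
          have := congrArg Fin.val hc1; simp at this; omega
      rw [e1, e2]
  classical
  refine ⟨?_, ?_⟩
  · -- each Ts j is a Steiner tree
    intro j
    refine ⟨⟨?_, ?_⟩, ?_, ?_⟩
    · -- Connected
      have hBA : (Ts j).coe.Adj ⟨B j, hB_mem j⟩ ⟨A j, hA_mem j⟩ := by
        show (Ts j).Adj (B j) (A j)
        rw [hadj]; exact Or.inr (Or.inr ⟨rfl, rfl⟩)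
      have key : ∀ u : ((Ts j).verts), (Ts j).coe.Reachable u ⟨A j, hA_mem j⟩ := by
        rintro ⟨u, hu⟩
        have hu' := hu
        rw [hverts' j, Set.mem_union] at hu'
        rcases hu' with hSi' | hABu
        · rw [hSi] at hSi'
          rcases hSi' with ⟨t, rfl, ht⟩ | ⟨t, rfl, ht⟩
          · have h1 : (Ts j).coe.Adj ⟨Sum.inl t, hu⟩ ⟨B j, hB_mem j⟩ := by
              show (Ts j).Adj (Sum.inl t) (B j)
              rw [hadj]; exact Or.inl (Or.inl ⟨t, ht, Or.inr ⟨rfl, rfl⟩⟩)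
            exact h1.reachable.trans hBA.reachable
          · have h1 : (Ts j).coe.Adj ⟨Sum.inr t, hu⟩ ⟨A j, hA_mem j⟩ := by
              show (Ts j).Adj (Sum.inr t) (A j)
              rw [hadj]; exact Or.inl (Or.inr ⟨t, ht, Or.inr ⟨rfl, rfl⟩⟩)
            exact h1.reachable
        · simp only [Set.mem_insert_iff, Set.mem_singleton_iff] at hABu
          rcases hABu with rfl | rfl
          · exact Reachable.refl _
          · exact hBA.reachable
      haveI : Nonempty ((Ts j).verts) := ⟨⟨A j, hA_mem j⟩⟩
      exact ⟨fun u w => (key u).trans (key w).symm⟩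
    · -- Acyclic
      intro v c hc
      have hall : ∀ u ∈ c.support,
          u = (⟨A j, hA_mem j⟩ : ((Ts j).verts)) ∨ u = ⟨B j, hB_mem j⟩ := by
        intro u hu
        obtain ⟨x, y, hxy, hx, hy⟩ := aux_cycle_two_nbrs hc hu
        have hx' : (Ts j).Adj u.val x.val := hx
        have hy' : (Ts j).Adj u.val y.val := hy
        have humem := Set.mem_union _ _ _ |>.mp ((Set.ext_iff.mp (hverts' j) u.val).mp u.2)
        rcases humem with hSi' | hABu
        · exact absurd (Subtype.ext (huniq j u.val x.val y.val hSi' hx' hy')) hxy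
        · simp only [Set.mem_insert_iff, Set.mem_singleton_iff] at hABu
          rcases hABu with h | h
          · exact Or.inl (Subtype.ext h)
          · exact Or.inr (Subtype.ext h)
      have h3 := hc.three_le_length
      have hnd := hc.support_nodup
      have hlen : c.support.tail.length = c.length := by
        rw [List.length_tail, Walk.length_support]; omega
      have hsub : c.support.tail.toFinset ⊆
          {(⟨A j, hA_mem j⟩ : ((Ts j).verts)), ⟨B j, hB_mem j⟩} := by
        intro u hu
        rcases hall u (List.mem_of_mem_tail (List.mem_toFinset.mp hu)) with rfl | rfl
        · simp
        · simp
      have h2 : c.support.tail.toFinset.card ≤ 2 := by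
        refine (Finset.card_le_card hsub).trans ?_
        refine (Finset.card_insert_le _ _).trans ?_
        simp
      rw [List.toFinset_card_of_nodup hnd] at h2
      omega
    · -- Si ⊆ verts
      intro v hv; rw [hverts' j]; exact Or.inl hv
    · -- leaves in Si
      intro v hv hno
      rw [hverts' j, Set.mem_union] at hv
      rcases hv with h | h
      · exact h
      exfalso; apply hno
      simp only [Set.mem_insert_iff, Set.mem_singleton_iff] at h
      rcases h with rfl | rfl
      · refine ⟨B j, Sum.inr ⟨0, by omega⟩, ?_, ?_, ?_⟩
        · rw [hB j]; intro hcon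
          simp only [Sum.inr.injEq, Fin.mk.injEq] at hcon
          omega
        · rw [hadj]; exact Or.inr (Or.inl ⟨rfl, rfl⟩)
        · rw [hadj]
          exact Or.inl (Or.inr ⟨⟨0, by omega⟩, show (0:ℕ) < s - i by omega, Or.inl ⟨rfl, rfl⟩⟩)
      · refine ⟨A j, Sum.inl ⟨0, by omega⟩, ?_, ?_, ?_⟩
        · rw [hA j]; intro hcon
          simp only [Sum.inl.injEq, Fin.mk.injEq] at hcon
          omega
        · rw [hadj]; exact Or.inr (Or.inr ⟨rfl, rfl⟩)
        · rw [hadj]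
          exact Or.inl (Or.inl ⟨⟨0, by omega⟩, show (0:ℕ) < i by omega, Or.inl ⟨rfl, rfl⟩⟩)
  · -- completely independent
    intro p q hpq
    have hpq' : (p : ℕ) ≠ (q : ℕ) := fun h => hpq (Fin.ext h)
    refine ⟨?_, ?_, ?_⟩
    · -- edge disjoint
      rw [Set.eq_empty_iff_forall_notMem]
      rintro e ⟨hep, heq⟩
      rw [hedges' p] at hep; rw [hedges' q] at heq
      simp only [Set.mem_union, Set.mem_setOf_eq, Set.mem_singleton_iff] at hep heq
      rcases hep with (⟨t, ht, rfl⟩ | ⟨t, ht, rfl⟩) | rfl <;>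
        rcases heq with (⟨t', ht', he⟩ | ⟨t', ht', he⟩) | he <;>
        simp [hA, hB, Sym2.eq_iff, Fin.ext_iff] at he <;> omega
    · -- verts intersect in Si
      rw [hverts' p, hverts' q]
      ext v
      simp only [Set.mem_inter_iff, Set.mem_union, Set.mem_insert_iff, Set.mem_singleton_iff]
      constructor
      · rintro ⟨h1, h2⟩
        rcases h1 with h1 | h1
        · exact h1
        rcases h2 with h2 | h2
        · exact h2
        exfalso
        rcases h1 with rfl | rfl <;> rcases h2 with h2 | h2 <;>
          simp [hA, hB, Fin.ext_iff] at h2 <;> omega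
      · intro hv; exact ⟨Or.inl hv, Or.inl hv⟩
    · -- internally disjoint paths
      intro x₁ hx₁ x₂ hx₂ hne P Q hP hQ hwP hwQ v hvP hvQ
      by_contra hcon
      push_neg at hcon
      obtain ⟨hv1, hv2⟩ := hcon
      have hvp : v ∈ (Ts p).verts := by
        rcases aux_walkIn_support P hwP v hvP with rfl | h
        · exact absurd rfl hv1
        · exact h
      have hvq : v ∈ (Ts q).verts := by
        rcases aux_walkIn_support Q hwQ v hvQ with rfl | h
        · exact absurd rfl hv1
        · exact h
      obtain ⟨a, b, hab, ha, hb⟩ := aux_internal_two_edges P hP hvP hv1 hv2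
      have hadj_a : (Ts p).Adj v a := by rw [← Subgraph.mem_edgeSet]; exact hwP _ ha
      have hadj_b : (Ts p).Adj v b := by rw [← Subgraph.mem_edgeSet]; exact hwP _ hb
      have hvSi : v ∉ Si := fun hvSi => hab (huniq p v a b hvSi hadj_a hadj_b)
      rw [hverts' p, Set.mem_union] at hvp
      rw [hverts' q, Set.mem_union] at hvq
      rcases hvp with h | h
      · exact hvSi h
      rcases hvq with h' | h'
      · exact hvSi h'
      simp only [Set.mem_insert_iff, Set.mem_singleton_iff] at h h'
      rcases h with rfl | rfl <;> rcases h' with h' | h' <;>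
        simp [hA, hB, Fin.ext_iff] at h' <;> omega
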